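/- Let Ŝ ⊆ S be a set of cluster representatives, and let Q̂_0 = ∅, Q̂_1, …, Q̂_k with k ≤ |Ŝ| be a greedy sequence for the total utility U over the ground set Ŝ (part of a greedy sequence over Ŝ that, continued for |Ŝ| steps, exhausts Ŝ). Then U(Q̂_k) ≥ (k/|Ŝ|) · U(Ŝ). -/

import Mathlib

open Finset

/-- Utility of a single trajectory with preference function `ψ` over a set of sites `Q`:
the maximum preference score over `Q`, with value `0` on the empty set. -/
noncomputable def trajU {S : Type*} (ψ : S → ℝ) (Q : Finset S) : ℝ :=
  if h : Q.Nonempty then Q.sup' h ψ else 0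

/-- Total utility: sum of the per-trajectory utilities over all trajectories. -/
noncomputable def totalU {T S : Type*} [Fintype T] (ψ : T → S → ℝ) (Q : Finset S) : ℝ :=
  ∑ j, trajU (ψ j) Q

/-- A greedy sequence of length `k` for a set function `f` over a ground set `Shat ⊆ S`:
`Q 0 = ∅` and at each step `θ` (for `1 ≤ θ ≤ k`), `Q θ` is obtained from `Q (θ-1)` by
inserting a new element `s_θ ∈ Shat \ Q (θ-1)`, chosen so that no other single insertion
of an element of `Shat` gives a larger value of `f`. -/
def IsGreedySeqOn {S : Type*} [DecidableEq S] (f : Finset S → ℝ) (Shat : Finset S)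
    (Q : ℕ → Finset S) (k : ℕ) : Prop :=
  Q 0 = ∅ ∧ ∀ θ, 1 ≤ θ → θ ≤ k →
    (∃ s ∈ Shat, s ∉ Q (θ - 1) ∧ Q θ = insert s (Q (θ - 1))) ∧
    ∀ s ∈ Shat, f (insert s (Q (θ - 1))) ≤ f (Q θ)
open Finset

lemma trajU_empty {S : Type*} (ψ : S → ℝ) : trajU ψ (∅ : Finset S) = 0 := by
  simp [trajU]

lemma trajU_insert {S : Type*} [DecidableEq S] (ψ : S → ℝ) {s : S} (hs : 0 ≤ ψ s)
    (Q : Finset S) : trajU ψ (insert s Q) = max (ψ s) (trajU ψ Q) := by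
  rcases Q.eq_empty_or_nonempty with h | h
  · subst h; simp [trajU, max_eq_left hs]
  · rw [trajU, trajU, dif_pos h, dif_pos (insert_nonempty s Q)]
    rw [sup'_insert h]

lemma trajU_nonneg {S : Type*} (ψ : S → ℝ) (hψ : ∀ s, 0 ≤ ψ s) (Q : Finset S) :
    0 ≤ trajU ψ Q := by
  unfold trajU
  split
  · next h => obtain ⟨x, hx⟩ := h; exact le_trans (hψ x) (le_sup' ψ hx)
  · exact le_refl 0

lemma trajU_mono {S : Type*} (ψ : S → ℝ) (hψ : ∀ s, 0 ≤ ψ s) {A B : Finset S}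
    (hAB : A ⊆ B) : trajU ψ A ≤ trajU ψ B := by
  rcases A.eq_empty_or_nonempty with h | h
  · subst h; rw [trajU_empty]; exact trajU_nonneg ψ hψ B
  · have hB : B.Nonempty := h.mono hAB
    rw [trajU, trajU, dif_pos h, dif_pos hB]
    exact sup'_mono ψ hAB h

lemma totalU_empty {T S : Type*} [Fintype T] (ψ : T → S → ℝ) :
    totalU ψ (∅ : Finset S) = 0 := by
  simp [totalU, trajU_empty]

lemma totalU_mono {T S : Type*} [Fintype T] (ψ : T → S → ℝ)
    (hψ : ∀ j s, 0 ≤ ψ j s) {A B : Finset S} (hAB : A ⊆ B) :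
    totalU ψ A ≤ totalU ψ B :=
  Finset.sum_le_sum fun j _ => trajU_mono (ψ j) (hψ j) hAB

lemma totalU_submod {T S : Type*} [Fintype T] [DecidableEq S] (ψ : T → S → ℝ)
    (hψ : ∀ j s, 0 ≤ ψ j s) {A B : Finset S} (hAB : A ⊆ B) (s : S) :
    totalU ψ (insert s B) - totalU ψ B ≤ totalU ψ (insert s A) - totalU ψ A := by
  unfold totalU
  rw [← Finset.sum_sub_distrib, ← Finset.sum_sub_distrib]
  refine Finset.sum_le_sum fun j _ => ?_
  rw [trajU_insert (ψ j) (hψ j s), trajU_insert (ψ j) (hψ j s)]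
  have hab := trajU_mono (ψ j) (hψ j) hAB
  rcases le_total (ψ j s) (trajU (ψ j) A) with h1 | h1 <;>
    rcases le_total (ψ j s) (trajU (ψ j) B) with h2 | h2 <;>
    simp only [max_eq_left, max_eq_right, h1, h2] <;> linarith
/-- if `Q` is a greedy sequence for the total utility `U` over the ground
set `Ŝ` of cluster representatives that, continued for `|Ŝ|` steps, exhausts `Ŝ`, then
its length-`k` prefix satisfies `U(Q̂_k) ≥ (k/|Ŝ|)·U(Ŝ)`. -/
theorem greedy_prefix_on_reps {T S : Type*} [Fintype T] [Fintype S] [DecidableEq S]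
    (ψ : T → S → ℝ) (hψ : ∀ j s, 0 ≤ ψ j s ∧ ψ j s ≤ 1)
    (Shat : Finset S) (k : ℕ) (hk : k ≤ Shat.card)
    (Q : ℕ → Finset S) (hgreedy : IsGreedySeqOn (totalU ψ) Shat Q Shat.card)
    (hQn : Q Shat.card = Shat) :
    ((k : ℝ) / (Shat.card : ℝ)) * totalU ψ Shat ≤ totalU ψ (Q k) := by
  obtain ⟨hQ0, hstep⟩ := hgreedy
  have hψ0 : ∀ j s, 0 ≤ ψ j s := fun j s => (hψ j s).1
  set n := Shat.card with hn
  -- one-step inclusion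
  have hstepsub : ∀ θ, 1 ≤ θ → θ ≤ n → Q (θ - 1) ⊆ Q θ := by
    intro θ h1 h2
    obtain ⟨s, _, _, hins⟩ := (hstep θ h1 h2).1
    rw [hins]; exact subset_insert _ _
  -- chain inclusion
  have hchain : ∀ a b, a ≤ b → b ≤ n → Q a ⊆ Q b := by
    intro a b hab hbn
    induction b with
    | zero => have : a = 0 := Nat.le_zero.mp hab; rw [this]
    | succ m ih =>
      rcases Nat.eq_or_lt_of_le hab with rfl | h
      · exact subset_rfl
      · have ham : a ≤ m := Nat.lt_succ_iff.mp h
        refine (ih ham (le_trans (Nat.le_succ m) hbn)).trans ?_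
        simpa using hstepsub (m + 1) (Nat.succ_le_succ (Nat.zero_le m)) hbn
  set d : ℕ → ℝ := fun θ => totalU ψ (Q θ) - totalU ψ (Q (θ - 1)) with hd
  -- telescoping
  have htel : ∀ m, m ≤ n → totalU ψ (Q m) = ∑ θ ∈ Icc 1 m, d θ := by
    intro m hm
    induction m with
    | zero => simp [hQ0, totalU_empty]
    | succ m ih =>
      rw [Finset.sum_Icc_succ_top (Nat.succ_le_succ (Nat.zero_le m)),
        ← ih (le_trans (Nat.le_succ m) hm)]
      simp [hd]
  -- increments are antitone
  have hanti : ∀ a b, 1 ≤ a → a ≤ b → b ≤ n → d b ≤ d a := by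
    intro a b h1 hab hbn
    obtain ⟨⟨s, hsS, _, hins⟩, _⟩ := hstep b (le_trans h1 hab) hbn
    have hgr := (hstep a h1 (le_trans hab hbn)).2 s hsS
    have hsubm := totalU_submod ψ hψ0
      (hchain (a - 1) (b - 1) (Nat.sub_le_sub_right hab 1)
        (le_trans (Nat.sub_le b 1) hbn)) s
    simp only [hd]
    rw [hins]
    linarith
  rcases Nat.eq_zero_or_pos k with rfl | hk1
  · simp [hQ0, totalU_empty]
  · have hn1 : 1 ≤ n := le_trans hk1 hk
    have hn0 : (0 : ℝ) < (n : ℝ) := by exact_mod_cast hn1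
    rw [← hQn, div_mul_eq_mul_div, div_le_iff₀ hn0]
    have hUk : totalU ψ (Q k) = ∑ θ ∈ Icc 1 k, d θ := htel k hk
    have hUn : totalU ψ (Q n) = ∑ θ ∈ Icc 1 n, d θ := htel n le_rfl
    have hsplit : (∑ θ ∈ Icc 1 k, d θ) + ∑ θ ∈ Ioc k n, d θ = ∑ θ ∈ Icc 1 n, d θ := by
      have e : ∀ b : ℕ, Icc 1 b = Ioc 0 b := fun b => Finset.Icc_add_one_left_eq_Ioc (a := 0) (b := b)
      rw [e, e]
      exact Finset.sum_Ioc_consecutive d (Nat.zero_le k) hk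
    have hA : (k : ℝ) * d k ≤ ∑ θ ∈ Icc 1 k, d θ := by
      have := Finset.card_nsmul_le_sum (Icc 1 k) d (d k)
        (fun θ hθ => hanti θ k (mem_Icc.mp hθ).1 (mem_Icc.mp hθ).2 hk)
      simpa [Nat.card_Icc, nsmul_eq_mul] using this
    have hB : (∑ θ ∈ Ioc k n, d θ) ≤ ((n : ℝ) - (k : ℝ)) * d k := by
      have := Finset.sum_le_card_nsmul (Ioc k n) d (d k)
        (fun θ hθ => hanti k θ hk1 (le_of_lt (mem_Ioc.mp hθ).1) (mem_Ioc.mp hθ).2)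
      have hc : ((n - k : ℕ) : ℝ) = (n : ℝ) - (k : ℝ) := by
        exact Nat.cast_sub hk
      simpa [Nat.card_Ioc, nsmul_eq_mul, hc] using this
    have hk0 : (0 : ℝ) ≤ (k : ℝ) := Nat.cast_nonneg k
    have hnk : (0 : ℝ) ≤ (n : ℝ) - (k : ℝ) := by
      have : (k : ℝ) ≤ (n : ℝ) := by exact_mod_cast hk
      linarith
    rw [hUk, hUn, ← hsplit]
    nlinarith [mul_le_mul_of_nonneg_left hB hk0, mul_le_mul_of_nonneg_left hA hnk]
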